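/- Let Ω be an n×n complex matrix with ‖Ω‖ < π in the ℓ² operator (spectral) norm. Then for every n×n complex matrix C, ∑'_{j≥0} (1/(j+1)!) • ad_Ω^j ( ∑'_{k≥0} ((B_k : ℝ)/k!) • ad_Ω^k C ) = C; that is, the operator d exp_Ω = ∑_{j≥0} (1/(j+1)!) ad_Ω^j composed with d exp_Ω^{−1} = ∑_{k≥0} (B_k/k!) ad_Ω^k is the identity. -/

import Mathlib

open Real Finset PowerSeries

lemma key_coeff (m : ℕ) :
    ∑ p ∈ Finset.HasAntidiagonal.antidiagonal m, ((bernoulli p.1 : ℚ) / p.1.factorial) * (1 / (p.2 + 1).factorial)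
      = if m = 0 then 1 else 0 := by
  have h := bernoulliPowerSeries_mul_exp_sub_one ℚ
  have h2 := congrArg (PowerSeries.coeff (m + 1)) h
  rw [PowerSeries.coeff_mul, PowerSeries.coeff_X] at h2
  rw [Finset.Nat.sum_antidiagonal_succ'] at h2
  simp only [bernoulliPowerSeries, coeff_mk, map_sub, coeff_exp, coeff_one,
    Nat.factorial_zero, Nat.cast_one, Algebra.algebraMap_self, RingHom.id_apply] at h2
  simpa using h2

lemma key_coeff_real (m : ℕ) :
    ∑ p ∈ Finset.HasAntidiagonal.antidiagonal m,
      ((1 : ℝ) / (p.1 + 1).factorial) * (((bernoulli p.2 : ℚ) : ℝ) / p.2.factorial)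
      = if m = 0 then 1 else 0 := by
  have h := congrArg (fun q : ℚ => (q : ℝ)) (key_coeff m)
  push_cast at h
  simp only [apply_ite (fun q : ℚ => (q : ℝ)), Rat.cast_one, Rat.cast_zero] at h
  rw [← h, ← Finset.Nat.sum_antidiagonal_swap]
  exact Finset.sum_congr rfl fun p _ => by simp only [Prod.fst_swap, Prod.snd_swap]; ring

lemma bern_even_est (m : ℕ) (hm : m ≠ 0) :
    |((bernoulli (2 * m) : ℚ) : ℝ)| / (2 * m).factorial ≤ 4 / (2 * π) ^ (2 * m) := by
  set B : ℝ := ((bernoulli (2 * m) : ℚ) : ℝ) with hB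
  have hs := hasSum_zeta_nat hm
  set S : ℝ := (-1 : ℝ) ^ (m + 1) * 2 ^ (2 * m - 1) * π ^ (2 * m) * B / (2 * m).factorial with hS
  have hSnn : 0 ≤ S := hs.nonneg fun k => by positivity
  have hSle : S ≤ 2 := by
    have h2 := hasSum_zeta_two
    have hle : S ≤ π ^ 2 / 6 := by
      refine hasSum_le (fun k => ?_) hs h2
      rcases Nat.eq_zero_or_pos k with rfl | hk
      · simp [Nat.mul_ne_zero two_ne_zero hm, zero_pow]
      · have hk1 : (1 : ℝ) ≤ (k : ℝ) := by exact_mod_cast hk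
        have : (k : ℝ) ^ 2 ≤ (k : ℝ) ^ (2 * m) := by
          apply pow_le_pow_right₀ hk1
          omega
        apply div_le_div_of_nonneg_left one_pos.le (by positivity) this
    have hpi : π < 3.15 := pi_lt_d2
    nlinarith [pi_pos]
  have habs : |S| = 2 ^ (2 * m - 1) * π ^ (2 * m) * (|B| / (2 * m).factorial) := by
    rw [hS, abs_div]
    simp only [abs_mul, abs_pow, abs_neg, abs_one, one_pow, abs_of_nonneg pi_pos.le,
      abs_of_nonneg (by norm_num : (0:ℝ) ≤ 2), Nat.abs_cast]
    ring
  have hpow : (2 * π) ^ (2 * m) = 2 * (2 ^ (2 * m - 1) * π ^ (2 * m)) := by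
    rw [mul_pow, ← mul_assoc, ← pow_succ']
    congr 2
    omega
  have hpos : (0 : ℝ) < 2 ^ (2 * m - 1) * π ^ (2 * m) := by positivity
  rw [div_le_div_iff₀ (by positivity) (by positivity : (0:ℝ) < (2 * π) ^ (2 * m))]
  have : |B| / (2 * m).factorial = S / (2 ^ (2 * m - 1) * π ^ (2 * m)) := by
    rw [← abs_of_nonneg hSnn, habs]
    field_simp
  have hfac : (0 : ℝ) < (2 * m).factorial := by positivity
  calc |B| * (2 * π) ^ (2 * m)
      = (|B| / (2 * m).factorial) * (2 * π) ^ (2 * m) * (2 * m).factorial := by field_simp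
    _ = (S / (2 ^ (2 * m - 1) * π ^ (2 * m))) * (2 * (2 ^ (2 * m - 1) * π ^ (2 * m)))
          * (2 * m).factorial := by rw [this, hpow]
    _ = 2 * S * (2 * m).factorial := by field_simp
    _ ≤ 4 * (2 * m).factorial := by nlinarith

lemma bern_bound (k : ℕ) :
    |((bernoulli k : ℚ) : ℝ)| / k.factorial ≤ 4 / (2 * π) ^ k := by
  match k with
  | 0 => norm_num
  | 1 =>
    rw [bernoulli_one]
    have h4 : π ≤ 4 := pi_le_four
    rw [div_le_div_iff₀ (by positivity) (by positivity)]
    push_cast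
    rw [show |(-1 / 2 : ℝ)| = 1/2 by rw [abs_of_nonpos (by norm_num)]; norm_num]
    simp only [pow_one, Nat.factorial_one, Nat.cast_one]
    nlinarith [pi_pos]
  | (k + 2) =>
    rcases Nat.even_or_odd (k + 2) with he | ho
    · obtain ⟨m, hm⟩ := he
      have hm' : k + 2 = 2 * m := by omega
      have : m ≠ 0 := by omega
      rw [hm']
      exact bern_even_est m this
    · have : bernoulli (k + 2) = 0 := by
        rw [bernoulli_eq_bernoulli'_of_ne_one (by omega)]
        exact bernoulli'_eq_zero_of_odd ho (by omega)
      rw [this]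
      simp
      positivity


theorem dexp_aux {E : Type*} [NormedAddCommGroup E] [NormedSpace ℂ E] [CompleteSpace E]
    (A : E →L[ℂ] E) (hAlt : ‖A‖ < 2 * π) (C : E) :
    ∑' j : ℕ, ((1 : ℝ) / (Nat.factorial (j + 1))) •
      (A ^ j) (∑' k : ℕ, (((bernoulli k : ℚ) : ℝ) / (Nat.factorial k)) • (A ^ k) C) = C := by
  classical
  have hpow : ∀ k : ℕ, ‖A ^ k‖ ≤ ‖A‖ ^ k := by
    intro k
    cases k with
    | zero =>
      simp only [pow_zero]
      rw [ContinuousLinearMap.one_def]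
      exact ContinuousLinearMap.norm_id_le
    | succ k => exact norm_pow_le' A k.succ_pos
  have h2pi : (0:ℝ) < 2 * π := by positivity
  set r : ℝ := ‖A‖ / (2 * π) with hr
  have hrnn : 0 ≤ r := by positivity
  have hr1 : r < 1 := (div_lt_one h2pi).mpr hAlt
  set v : ℕ → (E →L[ℂ] E) :=
    fun k => (((bernoulli k : ℚ) : ℝ) / k.factorial) • A ^ k with hv
  set u : ℕ → (E →L[ℂ] E) :=
    fun j => ((1 : ℝ) / (j + 1).factorial) • A ^ j with hu
  have hvnorm : Summable fun k => ‖v k‖ := by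
    refine Summable.of_nonneg_of_le (fun k => norm_nonneg _) (fun k => ?_)
      ((summable_geometric_of_lt_one hrnn hr1).mul_left 4)
    calc ‖v k‖
        ≤ |((bernoulli k : ℚ) : ℝ) / (k.factorial : ℝ)| * ‖A ^ k‖ := by
          simpa only [Real.norm_eq_abs] using
            ContinuousLinearMap.opNorm_smul_le
              (((bernoulli k : ℚ) : ℝ) / (k.factorial : ℝ)) (A ^ k)
      _ ≤ (|((bernoulli k : ℚ) : ℝ)| / (k.factorial : ℝ)) * ‖A‖ ^ k := by
          rw [abs_div, abs_of_nonneg (by positivity : (0:ℝ) ≤ ((k.factorial : ℕ) : ℝ))]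
          exact mul_le_mul_of_nonneg_left (hpow k) (by positivity)
      _ ≤ (4 / (2 * π) ^ k) * ‖A‖ ^ k :=
          mul_le_mul_of_nonneg_right (bern_bound k) (pow_nonneg (norm_nonneg A) k)
      _ = 4 * r ^ k := by rw [hr, div_pow]; ring
  have hunorm : Summable fun j => ‖u j‖ := by
    refine Summable.of_nonneg_of_le (fun j => norm_nonneg _) (fun j => ?_)
      (Real.summable_pow_div_factorial ‖A‖)
    calc ‖u j‖
        ≤ ((1:ℝ) / ((j + 1).factorial : ℝ)) * ‖A ^ j‖ := by
          simpa only [Real.norm_eq_abs,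
            abs_of_nonneg (by positivity : (0:ℝ) ≤ 1 / (((j+1).factorial : ℕ) : ℝ))] using
            ContinuousLinearMap.opNorm_smul_le ((1:ℝ) / ((j + 1).factorial : ℝ)) (A ^ j)
      _ ≤ ((1:ℝ) / (j.factorial : ℝ)) * ‖A‖ ^ j := by
          have hf : (j.factorial : ℝ) ≤ ((j + 1).factorial : ℝ) := by
            exact_mod_cast Nat.factorial_le (Nat.le_succ j)
          have h1 : ((1:ℝ) / ((j + 1).factorial : ℝ)) ≤ (1:ℝ) / (j.factorial : ℝ) :=
            one_div_le_one_div_of_le (by positivity) hf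
          exact mul_le_mul h1 (hpow j) (norm_nonneg _) (by positivity)
      _ = ‖A‖ ^ j / (j.factorial : ℝ) := by ring
  have hvs : Summable v := hvnorm.of_norm
  have hus : Summable u := hunorm.of_norm
  have hone : (∑' j, u j) * (∑' k, v k) = 1 := by
    rw [tsum_mul_tsum_eq_tsum_sum_antidiagonal_of_summable_norm hunorm hvnorm]
    have hterm : ∀ m : ℕ, ∑ p ∈ Finset.HasAntidiagonal.antidiagonal m, u p.1 * v p.2
        = (if m = 0 then (1:ℝ) else 0) • A ^ m := by
      intro m
      rw [← key_coeff_real m, Finset.sum_smul]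
      refine Finset.sum_congr rfl fun p hp => ?_
      have hpm : p.1 + p.2 = m := Finset.HasAntidiagonal.mem_antidiagonal.mp hp
      rw [hu, hv]
      simp only
      rw [smul_mul_assoc, mul_smul_comm, smul_smul, ← pow_add, hpm]
    rw [tsum_congr hterm, tsum_eq_single 0 (fun m hm => by simp [hm])]
    simp
  have happly : ∀ (w : ℕ → (E →L[ℂ] E)) (hw : Summable w) (X : E),
      (∑' k, w k) X = ∑' k, (w k) X := by
    intro w hw X
    have := (ContinuousLinearMap.apply ℂ E X).map_tsum hw
    simpa using this
  have hvC : (∑' k : ℕ, (((bernoulli k : ℚ) : ℝ) / (Nat.factorial k)) • (A ^ k) C)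
      = (∑' k, v k) C := by
    rw [happly v hvs C]
    refine tsum_congr fun k => ?_
    rw [hv]
    simp only [ContinuousLinearMap.coe_smul', Pi.smul_apply]
  rw [hvC]
  have houter : (∑' j : ℕ, ((1 : ℝ) / (Nat.factorial (j + 1))) •
      (A ^ j) ((∑' k, v k) C)) = (∑' j, u j) ((∑' k, v k) C) := by
    rw [happly u hus]
    refine tsum_congr fun j => ?_
    rw [hu]
    simp only [ContinuousLinearMap.coe_smul', Pi.smul_apply]
  rw [houter, ← ContinuousLinearMap.mul_apply, hone, ContinuousLinearMap.one_apply]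



open scoped Matrix.Norms.L2Operator

/-- If `‖Ω‖ < π` (ℓ² operator norm), then the operator `d exp_Ω = ∑_{j≥0} (1/(j+1)!) ad_Ω^j`
composed with `d exp_Ω⁻¹ = ∑_{k≥0} (B_k/k!) ad_Ω^k` is the identity. -/
theorem dexp_comp_dexpinv {n : ℕ} (Ω : Matrix (Fin n) (Fin n) ℂ) (hΩ : ‖Ω‖ < Real.pi)
    (C : Matrix (Fin n) (Fin n) ℂ) :
    ∑' j : ℕ, ((1 : ℝ) / (Nat.factorial (j + 1))) •
      (fun X : Matrix (Fin n) (Fin n) ℂ => Ω * X - X * Ω)^[j]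
        (∑' k : ℕ, (((bernoulli k : ℚ) : ℝ) / (Nat.factorial k)) •
          (fun X : Matrix (Fin n) (Fin n) ℂ => Ω * X - X * Ω)^[k] C) = C := by
  classical
  set A : Matrix (Fin n) (Fin n) ℂ →L[ℂ] Matrix (Fin n) (Fin n) ℂ :=
    ContinuousLinearMap.mul ℂ (Matrix (Fin n) (Fin n) ℂ) Ω -
      (ContinuousLinearMap.mul ℂ (Matrix (Fin n) (Fin n) ℂ)).flip Ω with hA
  have hApp : ∀ X : Matrix (Fin n) (Fin n) ℂ, A X = Ω * X - X * Ω := fun X => rfl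
  have hIter : ∀ (k : ℕ) (X : Matrix (Fin n) (Fin n) ℂ),
      (A ^ k) X = (fun X : Matrix (Fin n) (Fin n) ℂ => Ω * X - X * Ω)^[k] X := by
    intro k
    induction k with
    | zero => intro X; simp
    | succ k ih =>
      intro X
      rw [pow_succ', ContinuousLinearMap.mul_apply, ih, Function.iterate_succ_apply']
      exact hApp _
  have hAle : ‖A‖ ≤ 2 * ‖Ω‖ := by
    have h1 : ‖ContinuousLinearMap.mul ℂ (Matrix (Fin n) (Fin n) ℂ) Ω‖ ≤ ‖Ω‖ :=
      ContinuousLinearMap.opNorm_mul_apply_le ℂ _ Ω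
    have h2 : ‖(ContinuousLinearMap.mul ℂ (Matrix (Fin n) (Fin n) ℂ)).flip Ω‖ ≤ ‖Ω‖ := by
      refine ContinuousLinearMap.opNorm_le_bound _ (norm_nonneg Ω) fun X => ?_
      simp only [ContinuousLinearMap.flip_apply, ContinuousLinearMap.mul_apply']
      exact (norm_mul_le X Ω).trans_eq (mul_comm _ _)
    rw [hA]
    calc ‖ContinuousLinearMap.mul ℂ (Matrix (Fin n) (Fin n) ℂ) Ω -
          (ContinuousLinearMap.mul ℂ (Matrix (Fin n) (Fin n) ℂ)).flip Ω‖
        ≤ ‖ContinuousLinearMap.mul ℂ (Matrix (Fin n) (Fin n) ℂ) Ω‖ +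
          ‖(ContinuousLinearMap.mul ℂ (Matrix (Fin n) (Fin n) ℂ)).flip Ω‖ := norm_sub_le _ _
      _ ≤ 2 * ‖Ω‖ := by linarith
  have hAlt : ‖A‖ < 2 * π := lt_of_le_of_lt hAle (by linarith)
  have := dexp_aux A hAlt C
  calc ∑' j : ℕ, ((1 : ℝ) / (Nat.factorial (j + 1))) •
      (fun X : Matrix (Fin n) (Fin n) ℂ => Ω * X - X * Ω)^[j]
        (∑' k : ℕ, (((bernoulli k : ℚ) : ℝ) / (Nat.factorial k)) •
          (fun X : Matrix (Fin n) (Fin n) ℂ => Ω * X - X * Ω)^[k] C)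
      = ∑' j : ℕ, ((1 : ℝ) / (Nat.factorial (j + 1))) •
      (A ^ j) (∑' k : ℕ, (((bernoulli k : ℚ) : ℝ) / (Nat.factorial k)) • (A ^ k) C) := by
        have hinner : (∑' k : ℕ, (((bernoulli k : ℚ) : ℝ) / (Nat.factorial k)) •
            (fun X : Matrix (Fin n) (Fin n) ℂ => Ω * X - X * Ω)^[k] C)
            = ∑' k : ℕ, (((bernoulli k : ℚ) : ℝ) / (Nat.factorial k)) • (A ^ k) C :=
          tsum_congr fun k => by rw [hIter]
        rw [hinner]
        exact tsum_congr fun j => by rw [hIter]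
      _ = C := this
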